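/- Let σ ∈ T(λ,n) be a nonattacking filling with columns C_1,…,C_m, where C_j(i) = σ(i,j) and C_j has length c_j = λ'_j (note c_m = 1 since λ has strictly decreasing parts). Then Σ_{j=2}^m C(c_{j−1},2) − Σ_{j=2}^m ( inv(C_jC_{j−1}) − inv(C_j) ) = n(λ) − inv(σ), where C_jC_{j−1} is the two-column filling with left column C_j and right column C_{j−1}, inv of each filling is computed in its own shape, and C(c,2) is the binomial coefficient c choose 2. -/
import Mathlib


open Finset

namespace Compress

attribute [local instance] Classical.propDecidable

noncomputable section

/-! ### Permutations of `{1,…,n}`, 1-based conventions -/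

/-- The 1-based index `i ∈ {1,…,n}` as an element of `Fin n`. -/
def idx (n : ℕ) [NeZero n] (i : ℕ) : Fin n :=
  ⟨(i - 1) % n, Nat.mod_lt _ (Nat.pos_of_ne_zero (NeZero.ne n))⟩

/-- The 1-based value `w(i) ∈ {1,…,n}` of a permutation `w ∈ S_n`. -/
def pv {n : ℕ} [NeZero n] (w : Equiv.Perm (Fin n)) (i : ℕ) : ℕ :=
  (w (idx n i)).val + 1

/-- The transposition `(i,k)` of `{1,…,n}` (1-based). -/
def tr (n : ℕ) [NeZero n] (i k : ℕ) : Equiv.Perm (Fin n) :=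
  Equiv.swap (idx n i) (idx n k)

/-- The Coxeter length of `w ∈ S_n`, i.e. its number of inversions. -/
def len {n : ℕ} [NeZero n] (w : Equiv.Perm (Fin n)) : ℕ :=
  ((Finset.univ : Finset (Fin n × Fin n)).filter fun p => p.1 < p.2 ∧ w p.2 < w p.1).card

/-- Right multiplication of `w` by a list of transpositions (given as 1-based pairs),
taken from left to right. -/
def applyTs {n : ℕ} [NeZero n] (w : Equiv.Perm (Fin n)) (L : List (ℕ × ℕ)) :
    Equiv.Perm (Fin n) :=
  L.foldl (fun u p => u * tr n p.1 p.2) w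

/-! ### Subsequences of a list of transpositions, encoded by sets of positions -/

/-- The subsequence of the list `Δ` of transpositions occupying the (0-based) positions in `J`,
listed in increasing order of positions. -/
def pickP (Δ : List (ℕ × ℕ)) (J : Finset ℕ) : List (ℕ × ℕ) :=
  (J.sort (· ≤ ·)).map fun r => Δ.getD r (0, 0)

/-- `w r_1 ⋯ r_s` where `r_1,…,r_s` is the subsequence of `Δ` at positions `J`. -/
def wT {n : ℕ} [NeZero n] (w : Equiv.Perm (Fin n)) (Δ : List (ℕ × ℕ)) (J : Finset ℕ) :
    Equiv.Perm (Fin n) :=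
  applyTs w (pickP Δ J)

/-- The partial product `w r_1 ⋯ r_{a-1}` just before using the entry at position `r ∈ J`. -/
def stepPerm {n : ℕ} [NeZero n] (w : Equiv.Perm (Fin n)) (Δ : List (ℕ × ℕ)) (J : Finset ℕ)
    (r : ℕ) : Equiv.Perm (Fin n) :=
  applyTs w (pickP Δ (J.filter fun x => x < r))

/-- The entry at position `r ∈ J` is positive in the increasing-length convention:
`ℓ(w r_1⋯r_{a−1}) < ℓ(w r_1⋯r_a)`. -/
def isPosInc {n : ℕ} [NeZero n] (w : Equiv.Perm (Fin n)) (Δ : List (ℕ × ℕ)) (J : Finset ℕ)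
    (r : ℕ) : Prop :=
  len (stepPerm w Δ J r) <
    len (stepPerm w Δ J r * tr n (Δ.getD r (0, 0)).1 (Δ.getD r (0, 0)).2)

/-- The entry at position `r ∈ J` is positive in the decreasing-length convention
(a positive folding): `ℓ(w r_1⋯r_{a−1}) > ℓ(w r_1⋯r_a)`. -/
def isPosDec {n : ℕ} [NeZero n] (w : Equiv.Perm (Fin n)) (Δ : List (ℕ × ℕ)) (J : Finset ℕ)
    (r : ℕ) : Prop :=
  len (stepPerm w Δ J r * tr n (Δ.getD r (0, 0)).1 (Δ.getD r (0, 0)).2) <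
    len (stepPerm w Δ J r)

/-! ### The field `ℚ(q,t)` -/

/-- The field `ℚ(q,t)` of rational functions in two variables. -/
abbrev Kqt : Type := FractionRing (MvPolynomial (Fin 2) ℚ)

/-- The variable `q` of `ℚ(q,t)`. -/
def qq : Kqt := algebraMap (MvPolynomial (Fin 2) ℚ) Kqt (MvPolynomial.X 0)

/-- The variable `t` of `ℚ(q,t)`. -/
def tt : Kqt := algebraMap (MvPolynomial (Fin 2) ℚ) Kqt (MvPolynomial.X 1)

/-! ### The partition λ, its diagram and statistics on fillings -/

/-- `conj n lam j = λ'_j`, the length of column `j`. -/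
def conj (n : ℕ) (lam : ℕ → ℕ) (j : ℕ) : ℕ :=
  ((Finset.Icc 1 (n - 1)).filter fun i => j ≤ lam i).card

/-- The cells `(i,j)` of the Young diagram of λ: `1 ≤ i ≤ n−1`, `1 ≤ j ≤ λ_i`. -/
def cells (n : ℕ) (lam : ℕ → ℕ) : Finset (ℕ × ℕ) :=
  (Finset.Icc 1 (n - 1) ×ˢ Finset.Icc 1 (lam 1)).filter fun c => c.2 ≤ lam c.1

/-- Two cells attack each other: same column, or consecutive columns with the
left-column cell strictly above the right-column cell (column `j+1` is left of column `j`). -/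
def attack (u v : ℕ × ℕ) : Prop :=
  (u.2 = v.2 ∧ u.1 ≠ v.1) ∨ (u.2 = v.2 + 1 ∧ u.1 < v.1) ∨ (v.2 = u.2 + 1 ∧ v.1 < u.1)

/-- `u` comes before `v` in the reading order (columns right to left, i.e. column 1 first,
each column top to bottom). -/
def readBefore (u v : ℕ × ℕ) : Prop :=
  u.2 < v.2 ∨ (u.2 = v.2 ∧ u.1 < v.1)

/-- σ is a nonattacking filling of λ with entries in `{1,…,n}`, i.e. `σ ∈ T(λ,n)`. -/
def NonAttacking (n : ℕ) (lam : ℕ → ℕ) (σ : ℕ × ℕ → ℕ) : Prop :=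
  (∀ u ∈ cells n lam, σ u ∈ Finset.Icc 1 n) ∧
    ∀ u ∈ cells n lam, ∀ v ∈ cells n lam, attack u v → σ u ≠ σ v

/-- The descent set of a filling. -/
def DesSet (n : ℕ) (lam : ℕ → ℕ) (σ : ℕ × ℕ → ℕ) : Finset (ℕ × ℕ) :=
  (cells n lam).filter fun u => (u.1, u.2 + 1) ∈ cells n lam ∧ σ (u.1, u.2 + 1) < σ u

/-- `Diff(σ)`. -/
def DiffSet (n : ℕ) (lam : ℕ → ℕ) (σ : ℕ × ℕ → ℕ) : Finset (ℕ × ℕ) :=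
  (cells n lam).filter fun u => (u.1, u.2 + 1) ∈ cells n lam ∧ σ (u.1, u.2 + 1) ≠ σ u

/-- `arm(i,j) = λ_i − j`. -/
def armC (lam : ℕ → ℕ) (u : ℕ × ℕ) : ℕ := lam u.1 - u.2

/-- `leg(i,j) = λ'_j − i`. -/
def legC (n : ℕ) (lam : ℕ → ℕ) (u : ℕ × ℕ) : ℕ := conj n lam u.2 - u.1

/-- `maj(σ) = Σ_{u ∈ Des(σ)} arm(u)`. -/
def majStat (n : ℕ) (lam : ℕ → ℕ) (σ : ℕ × ℕ → ℕ) : ℕ :=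
  ∑ u ∈ DesSet n lam σ, armC lam u

/-- `|Inv(σ)|`: the number of pairs of attacking cells `u` before `v` in reading order
with `σ(u) > σ(v)`. -/
def invPairsL (n : ℕ) (lam : ℕ → ℕ) (σ : ℕ × ℕ → ℕ) : ℕ :=
  ((cells n lam ×ˢ cells n lam).filter fun x =>
    attack x.1 x.2 ∧ readBefore x.1 x.2 ∧ σ x.2 < σ x.1).card

/-- `inv(σ) = |Inv(σ)| − Σ_{u ∈ Des(σ)} leg(u)`. -/
def invStat (n : ℕ) (lam : ℕ → ℕ) (σ : ℕ × ℕ → ℕ) : ℤ :=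
  (invPairsL n lam σ : ℤ) - ∑ u ∈ DesSet n lam σ, (legC n lam u : ℤ)

/-- `n(λ) = Σ_i (i−1) λ_i`. -/
def nlam (n : ℕ) (lam : ℕ → ℕ) : ℕ :=
  ∑ i ∈ Finset.Icc 1 n, (i - 1) * lam i

/-- The Haglund–Haiman–Loehr-type weight of a filling:
`HHL(σ) = t^{n(λ)−inv(σ)} q^{maj(σ)} Π_{u∈Diff(σ)} (1−t)/(1−q^{arm(u)} t^{leg(u)+1})`. -/
def HHL (n : ℕ) (lam : ℕ → ℕ) (σ : ℕ × ℕ → ℕ) : Kqt :=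
  tt ^ ((nlam n lam : ℤ) - invStat n lam σ) * qq ^ majStat n lam σ *
    ∏ u ∈ DiffSet n lam σ, (1 - tt) / (1 - qq ^ armC lam u * tt ^ (legC n lam u + 1))

/-! ### The λ-chain Γ -/

/-- The row `(i,n),(i,n−1),…,(i,low)`. -/
def rowL (n i low : ℕ) : List (ℕ × ℕ) :=
  (List.range (n + 1 - low)).map fun r => (i, n - r)

/-- `Γ(k)`: rows `i = k, k−1, …, 1`, row `i` being `(i,n),…,(i,k+1)`. -/
def GammaK (n k : ℕ) : List (ℕ × ℕ) :=
  (List.range k).flatMap fun s => rowL n (k - s) (k + 1)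

/-- `Γ'(k)`: rows `i = k, k−1, …, 1`, row `i` being `(i,n),…,(i,k+2)`
(the last transposition `(i,k+1)` of each row of `Γ(k)` removed). -/
def GammaK' (n k : ℕ) : List (ℕ × ℕ) :=
  (List.range k).flatMap fun s => rowL n (k - s) (k + 2)

/-- The λ-chain `Γ = Γ_{λ_1} Γ_{λ_1−1} ⋯ Γ_2`, where `Γ_j = Γ'(λ'_j)` if
`j = min{i : λ'_i = λ'_j}` (equivalently `λ'_{j−1} ≠ λ'_j`) and `Γ_j = Γ(λ'_j)` otherwise.
Each entry records its segment index `j` together with the root `(i,k)`. -/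
def lamChain (n : ℕ) (lam : ℕ → ℕ) : List (ℕ × ℕ × ℕ) :=
  (List.range (lam 1 - 1)).flatMap fun s =>
    let j := lam 1 - s
    let seg :=
      if conj n lam (j - 1) = conj n lam j then GammaK n (conj n lam j)
      else GammaK' n (conj n lam j)
    seg.map fun p => (j, p.1, p.2)

/-- The underlying list of roots (transpositions) of the λ-chain. -/
def chainRoots (Γ : List (ℕ × ℕ × ℕ)) : List (ℕ × ℕ) := Γ.map fun e => e.2

/-! ### The Ram–Yip weight and the filling map -/

/-- The Ram–Yip weight `RY(w,T)` of a folding pair, where `T` is the subsequence of the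
λ-chain at positions `J`. -/
def RY (n : ℕ) [NeZero n] (lam : ℕ → ℕ) (w : Equiv.Perm (Fin n)) (J : Finset ℕ) : Kqt :=
  tt ^ (((len w : ℤ) - (len (wT w (chainRoots (lamChain n lam)) J) : ℤ) - (J.card : ℤ)) / 2) *
    (1 - tt) ^ J.card *
    ∏ r ∈ J,
      (let e := (lamChain n lam).getD r (0, 0, 0)
       let a := lam e.2.1 - (e.1 - 1)
       if isPosDec w (chainRoots (lamChain n lam)) J r then
         (1 - qq ^ a * tt ^ (e.2.2 - e.2.1))⁻¹
       else qq ^ a * tt ^ (e.2.2 - e.2.1) * (1 - qq ^ a * tt ^ (e.2.2 - e.2.1))⁻¹)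

/-- `π_j = w T_{λ_1} ⋯ T_{j+1}`: the product of `w` with the entries of `T` lying in the
segments of column index `> j`. -/
def pij (n : ℕ) [NeZero n] (lam : ℕ → ℕ) (w : Equiv.Perm (Fin n)) (J : Finset ℕ) (j : ℕ) :
    Equiv.Perm (Fin n) :=
  applyTs w (pickP (chainRoots (lamChain n lam))
    (J.filter fun r => j < ((lamChain n lam).getD r (0, 0, 0)).1))

/-- The filling map `f`: `f(w,T)(i,j) = π_j(i)` on cells of λ (and `0` off the diagram). -/
def fmap (n : ℕ) [NeZero n] (lam : ℕ → ℕ) (w : Equiv.Perm (Fin n)) (J : Finset ℕ) :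
    ℕ × ℕ → ℕ :=
  fun c => if c ∈ cells n lam then pv (pij n lam w J c.2) c.1 else 0

/-- The fiber `f⁻¹(σ)` of the filling map over σ, inside `ℱ(λ)`. -/
def fiberSet (n : ℕ) [NeZero n] (lam : ℕ → ℕ) (σ : ℕ × ℕ → ℕ) :
    Finset (Equiv.Perm (Fin n) × Finset ℕ) :=
  (Finset.univ ×ˢ (Finset.range (lamChain n lam).length).powerset).filter
    fun p => ∀ u ∈ cells n lam, fmap n lam p.1 p.2 u = σ u

/-- The Finset of all nonattacking fillings `T(λ,n)` (normalized to vanish off the diagram). -/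
def TFinset (n : ℕ) (lam : ℕ → ℕ) : Finset (ℕ × ℕ → ℕ) :=
  (((cells n lam).pi fun _ => Finset.Icc 1 n).image
      fun g c => if h : c ∈ cells n lam then g c h else 0).filter
    fun σ => NonAttacking n lam σ

/-- The monomial `x^{content(σ)} = x_1^{c_1} ⋯ x_n^{c_n}` in `ℚ(q,t)[x_1,…,x_n]`. -/
def contentMon (n : ℕ) [NeZero n] (lam : ℕ → ℕ) (σ : ℕ × ℕ → ℕ) :
    MvPolynomial (Fin n) Kqt :=
  ∏ a ∈ Finset.Icc 1 n,
    (MvPolynomial.X (idx n a)) ^ (((cells n lam).filter fun c => σ c = a).card)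

/-! ### The weight μ(T) and the content vector (for Statement 4) -/

/-- `l_r = #{r' ≤ r : β_{r'} = β_r}` for the `r`-th entry of the λ-chain (0-based positions). -/
def lcount (Γ : List (ℕ × ℕ × ℕ)) (r : ℕ) : ℕ :=
  ((List.range (r + 1)).filter fun r' => (Γ.getD r' (0, 0, 0)).2 = (Γ.getD r (0, 0, 0)).2).length

/-- The affine map `r̂_r : v ↦ v − (v_i − v_k − l_r)(e_i − e_k)` of `ℝⁿ`,
for the `r`-th entry `(i,k)` of the λ-chain. -/
def hatr (n : ℕ) [NeZero n] (Γ : List (ℕ × ℕ × ℕ)) (r : ℕ) (v : Fin n → ℝ) : Fin n → ℝ :=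
  fun x =>
    v x - (v (idx n (Γ.getD r (0, 0, 0)).2.1) - v (idx n (Γ.getD r (0, 0, 0)).2.2)
            - (lcount Γ r : ℝ)) *
      ((if x = idx n (Γ.getD r (0, 0, 0)).2.1 then (1 : ℝ) else 0) -
        (if x = idx n (Γ.getD r (0, 0, 0)).2.2 then (1 : ℝ) else 0))

/-- `μ(T) = r̂_{j_1} r̂_{j_2} ⋯ r̂_{j_s}(λ) ∈ ℝⁿ` for `T` the subsequence of the λ-chain at
positions `J = {j_1 < … < j_s}`. -/
def muT (n : ℕ) [NeZero n] (lam : ℕ → ℕ) (J : Finset ℕ) : Fin n → ℝ :=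
  (J.sort (· ≤ ·)).foldr (hatr n (lamChain n lam)) fun x => (lam (x.val + 1) : ℝ)

/-- The action of `S_n` on `ℝⁿ` by permuting coordinates: `(w(v))_{w(i)} = v_i`. -/
def wAct {n : ℕ} [NeZero n] (w : Equiv.Perm (Fin n)) (v : Fin n → ℝ) : Fin n → ℝ :=
  fun x => v (w⁻¹ x)

/-- The content vector of a filling, as an element of `ℝⁿ`. -/
def contentVec (n : ℕ) (lam : ℕ → ℕ) (σ : ℕ × ℕ → ℕ) : Fin n → ℝ :=
  fun x => (((cells n lam).filter fun c => σ c = x.val + 1).card : ℝ)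

/-! ### Row sums (Statements 5 and 6) -/

/-- The weight of a subsequence `T` (at positions `J`) of a list `Δ` of transpositions, in the
single-`q` setting: `t^{(ℓ(wT)−ℓ(w)−|T|)/2}(1−t)^{|T|} Π_{(i,k)∈T⁺} 1/(1−q t^{k−i})
Π_{(i,k)∈T⁻} q t^{k−i}/(1−q t^{k−i})`, positivity in the increasing-length convention. -/
def RYrow (n : ℕ) [NeZero n] (w : Equiv.Perm (Fin n)) (Δ : List (ℕ × ℕ)) (J : Finset ℕ) : Kqt :=
  tt ^ (((len (wT w Δ J) : ℤ) - (len w : ℤ) - (J.card : ℤ)) / 2) * (1 - tt) ^ J.card *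
    ∏ r ∈ J,
      (let e := Δ.getD r (0, 0)
       if isPosInc w Δ J r then (1 - qq * tt ^ (e.2 - e.1))⁻¹
       else qq * tt ^ (e.2 - e.1) * (1 - qq * tt ^ (e.2 - e.1))⁻¹)

/-- `Δ = ((1,p+2),(1,p+3),…,(1,n))`. -/
def delta5 (n p : ℕ) : List (ℕ × ℕ) :=
  (List.range (n - p - 1)).map fun r => (1, p + 2 + r)

/-- `Δ = ((i,p+1),(i,p+2),…,(i,n))`. -/
def delta6 (n i p : ℕ) : List (ℕ × ℕ) :=
  (List.range (n - p)).map fun r => (i, p + 1 + r)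

/-! ### The field `ℚ(q_1,…,q_p,t)` and two-column fillings (Statements 7, 9, 10) -/

/-- The field `ℚ(q_1,…,q_p,t)` of rational functions in `p+1` variables. -/
abbrev Kq (p : ℕ) : Type := FractionRing (MvPolynomial (Fin (p + 1)) ℚ)

/-- The variable `q_i` (for `1 ≤ i ≤ p`). -/
def qv (p i : ℕ) : Kq p :=
  algebraMap (MvPolynomial (Fin (p + 1)) ℚ) (Kq p)
    (MvPolynomial.X ⟨(i - 1) % (p + 1), Nat.mod_lt _ (Nat.succ_pos p)⟩)

/-- The variable `t`. -/
def tv (p : ℕ) : Kq p :=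
  algebraMap (MvPolynomial (Fin (p + 1)) ℚ) (Kq p) (MvPolynomial.X ⟨p, Nat.lt_succ_self p⟩)

/-- The multi-`q` weight of a subsequence `T` (at positions `J`) of `Δ`:
`t^{(ℓ(wT)−ℓ(w)−|T|)/2}(1−t)^{|T|} Π_{(i,k)∈T⁺} 1/(1−q_i t^{k−i})
Π_{(i,k)∈T⁻} q_i t^{k−i}/(1−q_i t^{k−i})`, positivity in the increasing-length convention. -/
def RYmulti (n p : ℕ) [NeZero n] (w : Equiv.Perm (Fin n)) (Δ : List (ℕ × ℕ)) (J : Finset ℕ) :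
    Kq p :=
  tv p ^ (((len (wT w Δ J) : ℤ) - (len w : ℤ) - (J.card : ℤ)) / 2) * (1 - tv p) ^ J.card *
    ∏ r ∈ J,
      (let e := Δ.getD r (0, 0)
       if isPosInc w Δ J r then (1 - qv p e.1 * tv p ^ (e.2 - e.1))⁻¹
       else qv p e.1 * tv p ^ (e.2 - e.1) * (1 - qv p e.1 * tv p ^ (e.2 - e.1))⁻¹)

/-- `Δ = ((1,p+1),…,(1,n),(2,p+1),…,(2,n),…,(p,p+1),…,(p,n))`. -/
def delta7 (n p : ℕ) : List (ℕ × ℕ) :=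
  (List.range p).flatMap fun s => (List.range (n - p)).map fun r => (s + 1, p + 1 + r)

/-- The cells of the two-column filling `C_2C_1`, with right column (column 1) of length `p'`
and left column (column 2) of length `p`. -/
def cells2 (p p' : ℕ) : Finset (ℕ × ℕ) :=
  (Finset.Icc 1 p' ×ˢ ({1} : Finset ℕ)) ∪ (Finset.Icc 1 p ×ˢ ({2} : Finset ℕ))

/-- The entry of the two-column filling `C_2C_1` at a cell. -/
def entry2 (C2 C1 : ℕ → ℕ) : ℕ × ℕ → ℕ :=
  fun c => if c.2 = 1 then C1 c.1 else C2 c.1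

/-- `|Inv(C_2C_1)|`: the number of pairs of attacking cells `u` before `v` in reading order
with `entry(u) > entry(v)`. -/
def invPairs2 (C2 C1 : ℕ → ℕ) (p p' : ℕ) : ℕ :=
  ((cells2 p p' ×ˢ cells2 p p').filter fun x =>
    attack x.1 x.2 ∧ readBefore x.1 x.2 ∧ entry2 C2 C1 x.2 < entry2 C2 C1 x.1).card

/-- `inv(C_2C_1) = |Inv(C_2C_1)| − Σ_{u ∈ Des(C_2C_1)} leg(u)` where
`Des(C_2C_1) = {(i,1) : i ≤ p, C_1(i) > C_2(i)}` and `leg(i,1) = p' − i`. -/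
def inv2 (C2 C1 : ℕ → ℕ) (p p' : ℕ) : ℤ :=
  (invPairs2 C2 C1 p p' : ℤ) -
    ∑ i ∈ (Finset.Icc 1 p).filter fun i => C2 i < C1 i, ((p' : ℤ) - (i : ℤ))

/-- `inv(C) = #{(i,k) : i < k, C(i) > C(k)}` for a single column `C` of length `p`. -/
def invColumn (C : ℕ → ℕ) (p : ℕ) : ℕ :=
  ((Finset.Icc 1 p ×ˢ Finset.Icc 1 p).filter fun x => x.1 < x.2 ∧ C x.2 < C x.1).card

end

end Compress

namespace Compress

attribute [local instance] Classical.propDecidable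

/-! ### Auxiliary definitions for the proof -/

/-- Column-`j` inversions of σ. -/
noncomputable def colInv (n : ℕ) (lam : ℕ → ℕ) (σ : ℕ × ℕ → ℕ) (j : ℕ) : ℕ :=
  invColumn (fun i => σ (i, j)) (conj n lam j)

/-- Cross inversions between columns `j` and `j-1`. -/
noncomputable def crossCard (n : ℕ) (lam : ℕ → ℕ) (σ : ℕ × ℕ → ℕ) (j : ℕ) : ℕ :=
  ((Finset.Icc 1 (conj n lam (j - 1)) ×ˢ Finset.Icc 1 (conj n lam j)).filter
    fun x => x.2 < x.1 ∧ σ (x.2, j) < σ (x.1, j - 1)).card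

/-- Leg sum over descents in column `j-1`. -/
noncomputable def desLeg (n : ℕ) (lam : ℕ → ℕ) (σ : ℕ × ℕ → ℕ) (j : ℕ) : ℤ :=
  ∑ i ∈ (Finset.Icc 1 (conj n lam j)).filter fun i => σ (i, j) < σ (i, j - 1),
    ((conj n lam (j - 1) : ℤ) - (i : ℤ))

/-! ### Structure of the diagram -/

lemma lam_anti {n : ℕ} {lam : ℕ → ℕ}
    (hreg : ∀ i, 1 ≤ i → i < n → lam (i + 1) < lam i) :
    ∀ i i', 1 ≤ i → i ≤ i' → i' ≤ n → lam i' ≤ lam i := by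
  intro i i' h1 h2
  induction i' with
  | zero => omega
  | succ k ih =>
    intro h3
    rcases Nat.lt_or_ge i (k + 1) with h | h
    · have hk : i ≤ k := by omega
      exact le_trans (le_of_lt (hreg k (by omega) (by omega))) (ih hk (by omega))
    · have : i = k + 1 := by omega
      rw [this]

lemma conj_filter_eq {n : ℕ} {lam : ℕ → ℕ}
    (hreg : ∀ i, 1 ≤ i → i < n → lam (i + 1) < lam i) (j : ℕ) :
    (Finset.Icc 1 (n - 1)).filter (fun i => j ≤ lam i) = Finset.Icc 1 (conj n lam j) := by
  set S := (Finset.Icc 1 (n - 1)).filter (fun i => j ≤ lam i) with hS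
  have hconj : conj n lam j = S.card := rfl
  rcases S.eq_empty_or_nonempty with h | h
  · rw [hconj, h]; simp
  · set M := S.max' h with hMdef
    have hM : M ∈ S := S.max'_mem h
    have hM1 : (1 ≤ M ∧ M ≤ n - 1) ∧ j ≤ lam M := by
      simpa [hS, Finset.mem_filter, Finset.mem_Icc] using hM
    have hSM : S = Finset.Icc 1 M := by
      ext i
      simp only [hS, Finset.mem_filter, Finset.mem_Icc]
      constructor
      · rintro ⟨⟨ha, hb⟩, hc⟩
        exact ⟨ha, S.le_max' i (by simp [hS, Finset.mem_filter, Finset.mem_Icc]; omega)⟩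
      · rintro ⟨ha, hb⟩
        exact ⟨⟨ha, hb.trans hM1.1.2⟩,
          hM1.2.trans (lam_anti hreg i M ha hb (by omega))⟩
    rw [hconj, hSM, Nat.card_Icc]
    simp

lemma conj_le {n : ℕ} {lam : ℕ → ℕ} (j : ℕ) : conj n lam j ≤ n - 1 := by
  unfold conj
  exact le_trans (Finset.card_filter_le _ _) (by simp)

lemma conj_anti (n : ℕ) (lam : ℕ → ℕ) {j j' : ℕ} (h : j ≤ j') :
    conj n lam j' ≤ conj n lam j := by
  unfold conj
  exact Finset.card_le_card (Finset.monotone_filter_right _ (by intro i hi; omega))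

lemma le_conj_iff {n : ℕ} {lam : ℕ → ℕ}
    (hreg : ∀ i, 1 ≤ i → i < n → lam (i + 1) < lam i) {j i : ℕ}
    (h1 : 1 ≤ i) (h2 : i ≤ n - 1) : j ≤ lam i ↔ i ≤ conj n lam j := by
  constructor
  · intro h
    have : i ∈ Finset.Icc 1 (conj n lam j) := by
      rw [← conj_filter_eq hreg j]
      simp [Finset.mem_filter, Finset.mem_Icc]; omega
    simp [Finset.mem_Icc] at this; omega
  · intro h
    have : i ∈ (Finset.Icc 1 (n - 1)).filter (fun i => j ≤ lam i) := by
      rw [conj_filter_eq hreg j]; simp [Finset.mem_Icc]; omega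
    simp [Finset.mem_filter] at this; exact this.2

lemma lam1_pos {n : ℕ} {lam : ℕ → ℕ} (hn : 2 ≤ n)
    (hreg : ∀ i, 1 ≤ i → i < n → lam (i + 1) < lam i) : 1 ≤ lam 1 := by
  have := hreg 1 le_rfl (by omega); omega

lemma conj_top {n : ℕ} {lam : ℕ → ℕ} (hn : 2 ≤ n)
    (hreg : ∀ i, 1 ≤ i → i < n → lam (i + 1) < lam i) : conj n lam (lam 1) = 1 := by
  have h2 : lam 2 < lam 1 := hreg 1 le_rfl (by omega)
  have h1 : 1 ≤ conj n lam (lam 1) := by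
    rw [← le_conj_iff hreg le_rfl (by omega)]
  have hle := conj_le (n := n) (lam := lam) (lam 1)
  by_contra hc
  have hc2 : 2 ≤ conj n lam (lam 1) := by omega
  have := (le_conj_iff hreg (i := 2) (j := lam 1) (by omega) (by omega)).2 hc2
  omega

lemma cells_mem {n : ℕ} {lam : ℕ → ℕ}
    (hreg : ∀ i, 1 ≤ i → i < n → lam (i + 1) < lam i) (i j : ℕ) :
    (i, j) ∈ cells n lam ↔ 1 ≤ j ∧ j ≤ lam 1 ∧ 1 ≤ i ∧ i ≤ conj n lam j := by
  unfold cells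
  simp only [Finset.mem_filter, Finset.mem_product, Finset.mem_Icc]
  constructor
  · rintro ⟨⟨⟨hi1, hi2⟩, hj1, hj2⟩, hle⟩
    exact ⟨hj1, hj2, hi1, (le_conj_iff hreg hi1 hi2).1 hle⟩
  · rintro ⟨hj1, hj2, hi1, hi2⟩
    have hin : i ≤ n - 1 := hi2.trans (conj_le j)
    exact ⟨⟨⟨hi1, hin⟩, hj1, hj2⟩, (le_conj_iff hreg hi1 hin).2 hi2⟩

/-! ### `n(λ)` as a sum of binomial coefficients -/

lemma gauss (c : ℕ) : ∑ i ∈ Finset.Icc 1 c, (i - 1) = c.choose 2 := by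
  induction c with
  | zero => simp
  | succ k ih =>
    rw [Finset.sum_Icc_succ_top (by omega), ih]
    have h2 : (k + 1).choose 2 = k.choose 1 + k.choose 2 := Nat.choose_succ_succ k 1
    rw [h2, Nat.choose_one_right]
    omega

lemma nlam_eq {n : ℕ} {lam : ℕ → ℕ} (hn : 2 ≤ n)
    (hreg : ∀ i, 1 ≤ i → i < n → lam (i + 1) < lam i) (hzero : lam n = 0) :
    nlam n lam = ∑ j ∈ Finset.Icc 1 (lam 1), (conj n lam j).choose 2 := by
  have hn1 : n - 1 + 1 = n := by omega
  have h1 : nlam n lam = ∑ i ∈ Finset.Icc 1 (n - 1), (i - 1) * lam i := by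
    unfold nlam
    rw [← hn1, Finset.sum_Icc_succ_top (by omega)]
    rw [hn1, hzero]
    simp
  rw [h1]
  have h2 : ∀ i ∈ Finset.Icc 1 (n - 1),
      (i - 1) * lam i = ∑ j ∈ Finset.Icc 1 (lam 1), if j ≤ lam i then i - 1 else 0 := by
    intro i hi
    simp only [Finset.mem_Icc] at hi
    rw [← Finset.sum_filter]
    have hfil : (Finset.Icc 1 (lam 1)).filter (fun j => j ≤ lam i) = Finset.Icc 1 (lam i) := by
      have hle : lam i ≤ lam 1 := lam_anti hreg 1 i le_rfl hi.1 (by omega)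
      ext j
      simp only [Finset.mem_filter, Finset.mem_Icc]
      omega
    rw [hfil, Finset.sum_const, Nat.card_Icc, smul_eq_mul, Nat.add_sub_cancel,
      Nat.mul_comm]
  rw [Finset.sum_congr rfl h2, Finset.sum_comm]
  refine Finset.sum_congr rfl fun j hj => ?_
  rw [← Finset.sum_filter, conj_filter_eq hreg j, gauss]

/-! ### Decomposition of the descent leg sum -/

lemma des_sum {n : ℕ} {lam : ℕ → ℕ}
    (hreg : ∀ i, 1 ≤ i → i < n → lam (i + 1) < lam i) (σ : ℕ × ℕ → ℕ) :
    ∑ u ∈ DesSet n lam σ, (legC n lam u : ℤ) =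
      ∑ j ∈ Finset.Icc 2 (lam 1), desLeg n lam σ j := by
  unfold desLeg
  have hmaps : ∀ u ∈ DesSet n lam σ, u.2 + 1 ∈ Finset.Icc 2 (lam 1) := by
    intro u hu
    simp only [DesSet, Finset.mem_filter] at hu
    have h1 := (cells_mem hreg u.1 u.2).1 hu.1
    have h2 := (cells_mem hreg u.1 (u.2 + 1)).1 hu.2.1
    simp only [Finset.mem_Icc]
    omega
  rw [← Finset.sum_fiberwise_of_maps_to hmaps]
  refine Finset.sum_congr rfl fun j hj => ?_
  simp only [Finset.mem_Icc] at hj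
  refine Finset.sum_bij' (fun u _ => u.1) (fun i _ => (i, j - 1)) ?_ ?_ ?_ ?_ ?_
  · intro u hu
    simp only [Finset.mem_filter, DesSet] at hu
    obtain ⟨⟨hcell, hcell', hlt⟩, hfib⟩ := hu
    have h2 := (cells_mem hreg u.1 (u.2 + 1)).1 hcell'
    simp only [Finset.mem_filter, Finset.mem_Icc]
    have hu2 : u.2 = j - 1 := by omega
    refine ⟨⟨h2.2.2.1, by rw [← hfib]; exact h2.2.2.2⟩, ?_⟩
    have : (u.1, u.2) = u := rfl
    rw [← hu2, hfib, ← this] at *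
    convert hlt using 2 <;> omega
  · intro i hi
    simp only [Finset.mem_filter, Finset.mem_Icc] at hi
    obtain ⟨⟨hi1, hi2⟩, hlt⟩ := hi
    have hj1 : j - 1 + 1 = j := by omega
    simp only [Finset.mem_filter, DesSet]
    constructor
    · constructor
      · rw [cells_mem hreg]
        exact ⟨by omega, by omega, hi1, hi2.trans (conj_anti n lam (by omega))⟩
      · rw [hj1]
        constructor
        · rw [cells_mem hreg]; exact ⟨by omega, by omega, hi1, hi2⟩
        · exact hlt
    · exact hj1
  · intro u hu
    simp only [Finset.mem_filter, DesSet] at hu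
    have hu2 : u.2 = j - 1 := by omega
    exact Prod.ext_iff.mpr ⟨rfl, hu2.symm⟩
  · intro i _
    rfl
  · intro u hu
    simp only [Finset.mem_filter, DesSet] at hu
    obtain ⟨⟨hcell, hcell', hlt⟩, hfib⟩ := hu
    have h1 := (cells_mem hreg u.1 u.2).1 hcell
    have h2 := (cells_mem hreg u.1 (u.2 + 1)).1 hcell'
    have hu2 : u.2 = j - 1 := by omega
    unfold legC
    rw [hu2]
    have : u.1 ≤ conj n lam (j - 1) := by rw [← hu2]; exact h1.2.2.2
    push_cast [Nat.cast_sub this]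
    ring

/-! ### Decomposition of the two-column inversion count -/

lemma mem_cells2 {p p' : ℕ} {c : ℕ × ℕ} :
    c ∈ cells2 p p' ↔ (1 ≤ c.1 ∧ c.1 ≤ p' ∧ c.2 = 1) ∨ (1 ≤ c.1 ∧ c.1 ≤ p ∧ c.2 = 2) := by
  unfold cells2
  simp only [Finset.mem_union, Finset.mem_product, Finset.mem_Icc, Finset.mem_singleton]
  tauto

lemma invPairs2_eq (C2 C1 : ℕ → ℕ) (p p' : ℕ) :
    invPairs2 C2 C1 p p' = invColumn C1 p' + invColumn C2 p +
      ((Finset.Icc 1 p' ×ˢ Finset.Icc 1 p).filter fun x =>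
        x.2 < x.1 ∧ C2 x.2 < C1 x.1).card := by
  unfold invPairs2
  set S := (cells2 p p' ×ˢ cells2 p p').filter fun x =>
    attack x.1 x.2 ∧ readBefore x.1 x.2 ∧ entry2 C2 C1 x.2 < entry2 C2 C1 x.1 with hSdef
  have hmem : ∀ x : (ℕ × ℕ) × ℕ × ℕ, x ∈ S ↔
      x.1 ∈ cells2 p p' ∧ x.2 ∈ cells2 p p' ∧ attack x.1 x.2 ∧ readBefore x.1 x.2 ∧
        entry2 C2 C1 x.2 < entry2 C2 C1 x.1 := by
    intro x
    simp only [hSdef, Finset.mem_filter, Finset.mem_product]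
    tauto
  rw [← Finset.card_filter_add_card_filter_not (s := S) (p := fun x => x.2.2 = 1)]
  have hA : (S.filter fun x => x.2.2 = 1).card = invColumn C1 p' := by
    unfold invColumn
    refine Finset.card_bij' (fun x _ => (x.1.1, x.2.1)) (fun y _ => ((y.1, 1), (y.2, 1)))
      ?_ ?_ ?_ ?_
    · intro x hx
      simp only [Finset.mem_filter] at hx
      obtain ⟨hxS, hx2⟩ := hx
      rw [hmem] at hxS
      obtain ⟨hc1, hc2, hatt, hrb, hent⟩ := hxS
      rw [mem_cells2] at hc1 hc2
      have hx1 : x.1.2 = 1 := by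
        rcases hrb with h | h
        · exfalso; omega
        · omega
      have hlt : x.1.1 < x.2.1 := by
        rcases hrb with h | h
        · omega
        · exact h.2
      simp only [Finset.mem_filter, Finset.mem_product, Finset.mem_Icc]
      have he2 : entry2 C2 C1 x.2 = C1 x.2.1 := by unfold entry2; rw [hx2]; simp
      have he1 : entry2 C2 C1 x.1 = C1 x.1.1 := by unfold entry2; rw [hx1]; simp
      rw [he1, he2] at hent
      refine ⟨⟨⟨?_, ?_⟩, ?_, ?_⟩, hlt, hent⟩ <;> omega
    · intro y hy
      simp only [Finset.mem_filter, Finset.mem_product, Finset.mem_Icc] at hy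
      obtain ⟨⟨⟨h1, h2⟩, h3, h4⟩, h5, h6⟩ := hy
      simp only [Finset.mem_filter]
      constructor
      · rw [hmem]
        refine ⟨mem_cells2.2 (Or.inl ⟨h1, h2, rfl⟩), mem_cells2.2 (Or.inl ⟨h3, h4, rfl⟩),
          ?_, ?_, ?_⟩
        · exact Or.inl ⟨rfl, by show y.1 ≠ y.2; omega⟩
        · exact Or.inr ⟨rfl, h5⟩
        · unfold entry2; simpa using h6
      · trivial
    · intro x hx
      simp only [Finset.mem_filter] at hx
      obtain ⟨hxS, hx2⟩ := hx
      rw [hmem] at hxS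
      obtain ⟨hc1, hc2, hatt, hrb, hent⟩ := hxS
      rw [mem_cells2] at hc1 hc2
      have hx1 : x.1.2 = 1 := by
        rcases hrb with h | h
        · exfalso; omega
        · omega
      ext <;> simp [hx1, hx2]
    · intro y _; rfl
  rw [hA]
  rw [← Finset.card_filter_add_card_filter_not
    (s := S.filter fun x => ¬x.2.2 = 1) (p := fun x => x.1.2 = 1)]
  have hB : ((S.filter fun x => ¬x.2.2 = 1).filter fun x => x.1.2 = 1).card =
      ((Finset.Icc 1 p' ×ˢ Finset.Icc 1 p).filter fun x =>
        x.2 < x.1 ∧ C2 x.2 < C1 x.1).card := by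
    refine Finset.card_bij' (fun x _ => (x.1.1, x.2.1)) (fun y _ => ((y.1, 1), (y.2, 2)))
      ?_ ?_ ?_ ?_
    · intro x hx
      simp only [Finset.mem_filter] at hx
      obtain ⟨⟨hxS, hx2⟩, hx1⟩ := hx
      rw [hmem] at hxS
      obtain ⟨hc1, hc2, hatt, hrb, hent⟩ := hxS
      rw [mem_cells2] at hc1 hc2
      have hx22 : x.2.2 = 2 := by omega
      have hlt : x.2.1 < x.1.1 := by
        rcases hatt with h | h | h <;> omega
      have he2 : entry2 C2 C1 x.2 = C2 x.2.1 := by unfold entry2; rw [hx22]; simp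
      have he1 : entry2 C2 C1 x.1 = C1 x.1.1 := by unfold entry2; rw [hx1]; simp
      rw [he1, he2] at hent
      simp only [Finset.mem_filter, Finset.mem_product, Finset.mem_Icc]
      refine ⟨⟨⟨?_, ?_⟩, ?_, ?_⟩, hlt, hent⟩ <;> omega
    · intro y hy
      simp only [Finset.mem_filter, Finset.mem_product, Finset.mem_Icc] at hy
      obtain ⟨⟨⟨h1, h2⟩, h3, h4⟩, h5, h6⟩ := hy
      simp only [Finset.mem_filter]
      refine ⟨⟨?_, by simp⟩, by simp⟩
      rw [hmem]
      refine ⟨mem_cells2.2 (Or.inl ⟨h1, h2, rfl⟩), mem_cells2.2 (Or.inr ⟨h3, h4, rfl⟩),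
        ?_, ?_, ?_⟩
      · exact Or.inr (Or.inr ⟨rfl, h5⟩)
      · exact Or.inl (by show (1 : ℕ) < 2; omega)
      · unfold entry2; simpa using h6
    · intro x hx
      simp only [Finset.mem_filter] at hx
      obtain ⟨⟨hxS, hx2⟩, hx1⟩ := hx
      rw [hmem] at hxS
      obtain ⟨hc1, hc2, _, _, _⟩ := hxS
      rw [mem_cells2] at hc1 hc2
      have hx22 : x.2.2 = 2 := by omega
      ext <;> simp [hx1, hx22]
    · intro y _; rfl
  have hC : ((S.filter fun x => ¬x.2.2 = 1).filter fun x => ¬x.1.2 = 1).card =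
      invColumn C2 p := by
    unfold invColumn
    refine Finset.card_bij' (fun x _ => (x.1.1, x.2.1)) (fun y _ => ((y.1, 2), (y.2, 2)))
      ?_ ?_ ?_ ?_
    · intro x hx
      simp only [Finset.mem_filter] at hx
      obtain ⟨⟨hxS, hx2⟩, hx1⟩ := hx
      rw [hmem] at hxS
      obtain ⟨hc1, hc2, hatt, hrb, hent⟩ := hxS
      rw [mem_cells2] at hc1 hc2
      have hx12 : x.1.2 = 2 := by omega
      have hx22 : x.2.2 = 2 := by omega
      have hlt : x.1.1 < x.2.1 := by
        rcases hrb with h | h <;> omega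
      have he2 : entry2 C2 C1 x.2 = C2 x.2.1 := by unfold entry2; rw [hx22]; simp
      have he1 : entry2 C2 C1 x.1 = C2 x.1.1 := by unfold entry2; rw [hx12]; simp
      rw [he1, he2] at hent
      simp only [Finset.mem_filter, Finset.mem_product, Finset.mem_Icc]
      refine ⟨⟨⟨?_, ?_⟩, ?_, ?_⟩, hlt, hent⟩ <;> omega
    · intro y hy
      simp only [Finset.mem_filter, Finset.mem_product, Finset.mem_Icc] at hy
      obtain ⟨⟨⟨h1, h2⟩, h3, h4⟩, h5, h6⟩ := hy
      simp only [Finset.mem_filter]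
      refine ⟨⟨?_, by simp⟩, by simp⟩
      rw [hmem]
      refine ⟨mem_cells2.2 (Or.inr ⟨h1, h2, rfl⟩), mem_cells2.2 (Or.inr ⟨h3, h4, rfl⟩),
        ?_, ?_, ?_⟩
      · exact Or.inl ⟨rfl, by show y.1 ≠ y.2; omega⟩
      · exact Or.inr ⟨rfl, h5⟩
      · unfold entry2; simpa using h6
    · intro x hx
      simp only [Finset.mem_filter] at hx
      obtain ⟨⟨hxS, hx2⟩, hx1⟩ := hx
      rw [hmem] at hxS
      obtain ⟨hc1, hc2, _, _, _⟩ := hxS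
      rw [mem_cells2] at hc1 hc2
      have hx12 : x.1.2 = 2 := by omega
      have hx22 : x.2.2 = 2 := by omega
      ext <;> simp [hx12, hx22]
    · intro y _; rfl
  rw [hB, hC]
  omega

/-! ### Decomposition of the global inversion count -/

lemma invPairsL_eq {n : ℕ} {lam : ℕ → ℕ}
    (hreg : ∀ i, 1 ≤ i → i < n → lam (i + 1) < lam i) (σ : ℕ × ℕ → ℕ) :
    invPairsL n lam σ =
      (∑ j ∈ Finset.Icc 1 (lam 1), colInv n lam σ j) +
      ∑ j ∈ Finset.Icc 2 (lam 1), crossCard n lam σ j := by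
  unfold colInv crossCard
  unfold invPairsL
  set S := (cells n lam ×ˢ cells n lam).filter fun x =>
    attack x.1 x.2 ∧ readBefore x.1 x.2 ∧ σ x.2 < σ x.1 with hSdef
  have hmem : ∀ x : (ℕ × ℕ) × ℕ × ℕ, x ∈ S ↔
      x.1 ∈ cells n lam ∧ x.2 ∈ cells n lam ∧ attack x.1 x.2 ∧ readBefore x.1 x.2 ∧
        σ x.2 < σ x.1 := by
    intro x
    simp only [hSdef, Finset.mem_filter, Finset.mem_product]
    tauto
  have hmaps : ∀ x ∈ S, x.2.2 ∈ Finset.Icc 1 (lam 1) := by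
    intro x hx
    rw [hmem] at hx
    have := (cells_mem hreg x.2.1 x.2.2).1 hx.2.1
    simp only [Finset.mem_Icc]
    omega
  rw [Finset.card_eq_sum_card_fiberwise hmaps]
  have hfib : ∀ j ∈ Finset.Icc 1 (lam 1), (S.filter fun x => x.2.2 = j).card =
      invColumn (fun i => σ (i, j)) (conj n lam j) +
      (if 2 ≤ j then
        ((Finset.Icc 1 (conj n lam (j - 1)) ×ˢ Finset.Icc 1 (conj n lam j)).filter
          fun x => x.2 < x.1 ∧ σ (x.2, j) < σ (x.1, j - 1)).card
       else 0) := by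
    intro j hj
    simp only [Finset.mem_Icc] at hj
    rw [← Finset.card_filter_add_card_filter_not
      (s := S.filter fun x => x.2.2 = j) (p := fun x => x.1.2 = j)]
    congr 1
    · unfold invColumn
      refine Finset.card_bij' (fun x _ => (x.1.1, x.2.1)) (fun y _ => ((y.1, j), (y.2, j)))
        ?_ ?_ ?_ ?_
      · intro x hx
        simp only [Finset.mem_filter] at hx
        obtain ⟨⟨hxS, hx22⟩, hx12⟩ := hx
        rw [hmem] at hxS
        obtain ⟨hc1, hc2, hatt, hrb, hent⟩ := hxS
        have he1 : x.1 = (x.1.1, j) := Prod.ext_iff.mpr ⟨rfl, hx12⟩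
        have he2 : x.2 = (x.2.1, j) := Prod.ext_iff.mpr ⟨rfl, hx22⟩
        rw [he1] at hc1 hent
        rw [he2] at hc2 hent
        have hm1 := (cells_mem hreg x.1.1 j).1 hc1
        have hm2 := (cells_mem hreg x.2.1 j).1 hc2
        have hlt : x.1.1 < x.2.1 := by
          rcases hrb with h | h
          · omega
          · exact h.2
        simp only [Finset.mem_filter, Finset.mem_product, Finset.mem_Icc]
        exact ⟨⟨⟨hm1.2.2.1, hm1.2.2.2⟩, hm2.2.2.1, hm2.2.2.2⟩, hlt, hent⟩
      · intro y hy
        simp only [Finset.mem_filter, Finset.mem_product, Finset.mem_Icc] at hy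
        obtain ⟨⟨⟨h1, h2⟩, h3, h4⟩, h5, h6⟩ := hy
        simp only [Finset.mem_filter]
        refine ⟨⟨?_, by simp⟩, by simp⟩
        rw [hmem]
        refine ⟨(cells_mem hreg y.1 j).2 ⟨by omega, by omega, h1, h2⟩,
          (cells_mem hreg y.2 j).2 ⟨by omega, by omega, h3, h4⟩, ?_, ?_, h6⟩
        · exact Or.inl ⟨rfl, by show y.1 ≠ y.2; omega⟩
        · exact Or.inr ⟨rfl, h5⟩
      · intro x hx
        simp only [Finset.mem_filter] at hx
        obtain ⟨⟨hxS, hx22⟩, hx12⟩ := hx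
        ext <;> simp [hx12, hx22]
      · intro y _; rfl
    · by_cases h2j : 2 ≤ j
      · rw [if_pos h2j]
        refine Finset.card_bij' (fun x _ => (x.1.1, x.2.1))
          (fun y _ => ((y.1, j - 1), (y.2, j))) ?_ ?_ ?_ ?_
        · intro x hx
          simp only [Finset.mem_filter] at hx
          obtain ⟨⟨hxS, hx22⟩, hx12⟩ := hx
          rw [hmem] at hxS
          obtain ⟨hc1, hc2, hatt, hrb, hent⟩ := hxS
          have hx12' : x.1.2 = j - 1 ∧ x.2.1 < x.1.1 := by
            rcases hrb with h | h
            · rcases hatt with ha | ha | ha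
              · omega
              · exact absurd ha.1 (by omega)
              · exact ⟨by omega, ha.2⟩
            · omega
          have he1 : x.1 = (x.1.1, j - 1) := Prod.ext_iff.mpr ⟨rfl, hx12'.1⟩
          have he2 : x.2 = (x.2.1, j) := Prod.ext_iff.mpr ⟨rfl, hx22⟩
          rw [he1] at hc1 hent
          rw [he2] at hc2 hent
          have hm1 := (cells_mem hreg x.1.1 (j - 1)).1 hc1
          have hm2 := (cells_mem hreg x.2.1 j).1 hc2
          simp only [Finset.mem_filter, Finset.mem_product, Finset.mem_Icc]
          exact ⟨⟨⟨hm1.2.2.1, hm1.2.2.2⟩, hm2.2.2.1, hm2.2.2.2⟩, hx12'.2, hent⟩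
        · intro y hy
          simp only [Finset.mem_filter, Finset.mem_product, Finset.mem_Icc] at hy
          obtain ⟨⟨⟨h1, h2⟩, h3, h4⟩, h5, h6⟩ := hy
          simp only [Finset.mem_filter]
          refine ⟨⟨?_, by simp⟩, by show ¬(j - 1 = j); omega⟩
          rw [hmem]
          refine ⟨(cells_mem hreg y.1 (j - 1)).2 ⟨by omega, by omega, h1, h2⟩,
            (cells_mem hreg y.2 j).2 ⟨by omega, by omega, h3, h4⟩, ?_, ?_, h6⟩
          · exact Or.inr (Or.inr ⟨by show j = (j - 1) + 1; omega, h5⟩)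
          · exact Or.inl (by show j - 1 < j; omega)
        · intro x hx
          simp only [Finset.mem_filter] at hx
          obtain ⟨⟨hxS, hx22⟩, hx12⟩ := hx
          rw [hmem] at hxS
          obtain ⟨hc1, hc2, hatt, hrb, hent⟩ := hxS
          have hx12' : x.1.2 = j - 1 := by
            rcases hrb with h | h
            · rcases hatt with ha | ha | ha
              · omega
              · exact absurd ha.1 (by omega)
              · omega
            · omega
          ext <;> simp [hx12', hx22]
        · intro y _; rfl
      · rw [if_neg h2j]
        have hj1 : j = 1 := by omega
        rw [Finset.card_eq_zero]
        apply Finset.eq_empty_of_forall_notMem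
        intro x hx
        simp only [Finset.mem_filter] at hx
        obtain ⟨⟨hxS, hx22⟩, hx12⟩ := hx
        rw [hmem] at hxS
        obtain ⟨hc1, _, _, hrb, _⟩ := hxS
        have := (cells_mem hreg x.1.1 x.1.2).1 hc1
        rcases hrb with h | h <;> omega
  rw [Finset.sum_congr rfl hfib, Finset.sum_add_distrib]
  congr 1
  rw [← Finset.sum_filter]
  apply Finset.sum_congr
  · ext j
    simp only [Finset.mem_filter, Finset.mem_Icc]
    omega
  · intros; rfl

/-! ### Small pieces for the final assembly -/

lemma inv2_expand {n : ℕ} (lam : ℕ → ℕ) (σ : ℕ × ℕ → ℕ) (j : ℕ) :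
    inv2 (fun i => σ (i, j)) (fun i => σ (i, j - 1)) (conj n lam j) (conj n lam (j - 1))
        - (invColumn (fun i => σ (i, j)) (conj n lam j) : ℤ)
      = (colInv n lam σ (j - 1) : ℤ) + (crossCard n lam σ j : ℤ) - desLeg n lam σ j := by
  unfold inv2 colInv crossCard desLeg
  rw [invPairs2_eq]
  push_cast
  ring

lemma sum_shift (m : ℕ) (g : ℕ → ℤ) :
    ∑ j ∈ Finset.Icc 2 m, g (j - 1) = ∑ j ∈ Finset.Icc 1 (m - 1), g j := by
  refine Finset.sum_bij' (fun j _ => j - 1) (fun j _ => j + 1) ?_ ?_ ?_ ?_ ?_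
  all_goals intro a ha
  all_goals simp only [Finset.mem_Icc] at ha ⊢
  all_goals omega

lemma invColumn_one (C : ℕ → ℕ) : invColumn C 1 = 0 := by
  unfold invColumn
  rw [Finset.card_eq_zero]
  apply Finset.eq_empty_of_forall_notMem
  intro x hx
  simp only [Finset.mem_filter, Finset.mem_product, Finset.mem_Icc] at hx
  omega

/-- For a nonattacking filling `σ ∈ T(λ,n)` with columns `C_j` of lengths
`c_j = λ'_j`: `Σ_{j=2}^m C(c_{j−1},2) − Σ_{j=2}^m (inv(C_jC_{j−1}) − inv(C_j)) = n(λ) − inv(σ)`. -/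
theorem column_statistics_sum (n : ℕ) (hn : 2 ≤ n) (lam : ℕ → ℕ)
    (hreg : ∀ i, 1 ≤ i → i < n → lam (i + 1) < lam i) (hzero : lam n = 0)
    (σ : ℕ × ℕ → ℕ) (hσ : NonAttacking n lam σ) :
    (∑ j ∈ Finset.Icc 2 (lam 1), ((conj n lam (j - 1)).choose 2 : ℤ))
        - ∑ j ∈ Finset.Icc 2 (lam 1),
            (inv2 (fun i => σ (i, j)) (fun i => σ (i, j - 1))
                (conj n lam j) (conj n lam (j - 1))
              - (invColumn (fun i => σ (i, j)) (conj n lam j) : ℤ))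
      = (nlam n lam : ℤ) - invStat n lam σ := by
  have hm1 : 1 ≤ lam 1 := lam1_pos hn hreg
  have hsummand : ∀ j ∈ Finset.Icc 2 (lam 1),
      inv2 (fun i => σ (i, j)) (fun i => σ (i, j - 1)) (conj n lam j) (conj n lam (j - 1))
          - (invColumn (fun i => σ (i, j)) (conj n lam j) : ℤ)
        = (colInv n lam σ (j - 1) : ℤ) + (crossCard n lam σ j : ℤ) - desLeg n lam σ j :=
    fun j _ => inv2_expand lam σ j
  rw [Finset.sum_congr rfl hsummand]
  unfold invStat
  rw [invPairsL_eq hreg σ, des_sum hreg σ, nlam_eq hn hreg hzero]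
  have hsplit : ∀ g : ℕ → ℤ,
      ∑ j ∈ Finset.Icc 1 (lam 1), g j = (∑ j ∈ Finset.Icc 1 (lam 1 - 1), g j) + g (lam 1) := by
    intro g
    obtain ⟨k, hk⟩ : ∃ k, lam 1 = k + 1 := ⟨lam 1 - 1, by omega⟩
    rw [hk, Finset.sum_Icc_succ_top (by omega)]
    simp
  have e1 : ∑ j ∈ Finset.Icc 2 (lam 1), ((conj n lam (j - 1)).choose 2 : ℤ)
      = ∑ j ∈ Finset.Icc 1 (lam 1 - 1), ((conj n lam j).choose 2 : ℤ) :=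
    sum_shift (lam 1) fun j => ((conj n lam j).choose 2 : ℤ)
  have e2 : ∑ j ∈ Finset.Icc 2 (lam 1), ((colInv n lam σ (j - 1) : ℤ))
      = ∑ j ∈ Finset.Icc 1 (lam 1 - 1), (colInv n lam σ j : ℤ) :=
    sum_shift (lam 1) fun j => (colInv n lam σ j : ℤ)
  have e3 : (∑ j ∈ Finset.Icc 1 (lam 1), ((conj n lam j).choose 2 : ℤ))
      = (∑ j ∈ Finset.Icc 1 (lam 1 - 1), ((conj n lam j).choose 2 : ℤ)) + 0 := by
    rw [hsplit fun j => ((conj n lam j).choose 2 : ℤ), conj_top hn hreg]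
    norm_num
  have e4 : (∑ j ∈ Finset.Icc 1 (lam 1), (colInv n lam σ j : ℤ))
      = (∑ j ∈ Finset.Icc 1 (lam 1 - 1), (colInv n lam σ j : ℤ)) + 0 := by
    rw [hsplit fun j => (colInv n lam σ j : ℤ)]
    have : colInv n lam σ (lam 1) = 0 := by
      unfold colInv
      rw [conj_top hn hreg, invColumn_one]
    rw [this]
    norm_num
  push_cast
  rw [Finset.sum_sub_distrib, Finset.sum_add_distrib]
  push_cast at e1 e2 e3 e4
  linarith [e1, e2, e3, e4]

end Compress
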